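/- Let G_τ(A,C) = Σ_{y=1}^h f_y ‖m_y − Σ A C_y‖² + τ ‖A‖_F² with τ > 0 and Σ symmetric positive semidefinite with rank(Σ) ≥ d ≥ 1. If some Σ m_{y₀} ≠ 0, then the infimum of G_τ over ℝ^{p×d} × (ℝ^d)^h is strictly less than Σ_{y=1}^h f_y ‖m_y‖², yet every stationary point (A,C) of G_τ satisfies G_τ(A,C) = Σ_{y=1}^h f_y ‖m_y‖²; hence the infimum of G_τ is not attained at any stationary point, and therefore not attained at all. -/

import Mathlib

open Matrix

/-- The ridge SIR criterion
`G_τ(A,C) = Σ_y f_y ‖m_y − Σ A C_y‖² + τ ‖A‖_F²`. -/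
noncomputable def Gt {p d h : ℕ} (f : Fin h → ℝ) (m : Fin h → Fin p → ℝ)
    (S : Matrix (Fin p) (Fin p) ℝ) (τ : ℝ)
    (A : Matrix (Fin p) (Fin d) ℝ) (C : Fin h → Fin d → ℝ) : ℝ :=
  (∑ y, f y * ∑ i, (m y i - S.mulVec (A.mulVec (C y)) i) ^ 2)
    + τ * ∑ i, ∑ j, (A i j) ^ 2

private lemma hasDerivAt_quadG {p d h : ℕ} (f : Fin h → ℝ) (a b : Fin h → Fin p → ℝ)
    (τ : ℝ) (c e : Fin p → Fin d → ℝ) :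
    HasDerivAt (fun t : ℝ => (∑ y, f y * ∑ i, (a y i + t * b y i) ^ 2)
        + τ * ∑ i, ∑ j, (c i j + t * e i j) ^ 2)
      ((∑ y, f y * ∑ i, 2 * a y i * b y i) + τ * ∑ i, ∑ j, 2 * c i j * e i j) 0 := by
  have base : ∀ u v : ℝ, HasDerivAt (fun t : ℝ => (u + t * v) ^ 2) (2 * u * v) 0 := by
    intro u v
    have h1 : HasDerivAt (fun t : ℝ => u + t * v) v 0 := by
      simpa using ((hasDerivAt_id (0 : ℝ)).mul_const v).const_add u
    have h2 := h1.fun_pow 2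
    norm_num at h2
    convert h2 using 1
  have h1 : HasDerivAt (fun t : ℝ => ∑ y, f y * ∑ i, (a y i + t * b y i) ^ 2)
      (∑ y, f y * ∑ i, 2 * a y i * b y i) 0 :=
    HasDerivAt.fun_sum fun y _ =>
      (HasDerivAt.fun_sum fun i _ => base (a y i) (b y i)).const_mul (f y)
  have h2 : HasDerivAt (fun t : ℝ => ∑ i, ∑ j, (c i j + t * e i j) ^ 2)
      (∑ i, ∑ j, 2 * c i j * e i j) 0 :=
    HasDerivAt.fun_sum fun i _ => HasDerivAt.fun_sum fun j _ => base (c i j) (e i j)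
  exact h1.add (h2.const_mul τ)

private lemma derivA {p d h : ℕ} (f : Fin h → ℝ) (m : Fin h → Fin p → ℝ)
    (S : Matrix (Fin p) (Fin p) ℝ) (τ : ℝ) (A E : Matrix (Fin p) (Fin d) ℝ)
    (C : Fin h → Fin d → ℝ) :
    deriv (fun t : ℝ => Gt f m S τ (A + t • E) C) 0
      = (∑ y, f y * ∑ i, 2 * (m y i - S.mulVec (A.mulVec (C y)) i)
            * (-(S.mulVec (E.mulVec (C y)) i)))
        + τ * ∑ i, ∑ j, 2 * A i j * E i j := by
  have key : (fun t : ℝ => Gt f m S τ (A + t • E) C)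
      = fun t : ℝ => (∑ y, f y * ∑ i,
          ((m y i - S.mulVec (A.mulVec (C y)) i) + t * (-(S.mulVec (E.mulVec (C y)) i))) ^ 2)
        + τ * ∑ i, ∑ j, (A i j + t * E i j) ^ 2 := by
    funext t
    unfold Gt
    congr 1
    · refine Finset.sum_congr rfl fun y _ => ?_
      congr 1
      refine Finset.sum_congr rfl fun i _ => ?_
      rw [Matrix.add_mulVec, Matrix.smul_mulVec, Matrix.mulVec_add, Matrix.mulVec_smul]
      simp only [Pi.add_apply, Pi.smul_apply, smul_eq_mul]
      ring

  rw [key]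
  exact (hasDerivAt_quadG f _ _ τ _ _).deriv

private lemma derivC {p d h : ℕ} (f : Fin h → ℝ) (m : Fin h → Fin p → ℝ)
    (S : Matrix (Fin p) (Fin p) ℝ) (τ : ℝ) (A : Matrix (Fin p) (Fin d) ℝ)
    (C : Fin h → Fin d → ℝ) (y : Fin h) (w : Fin d → ℝ) :
    deriv (fun t : ℝ => Gt f m S τ A (Function.update C y (C y + t • w))) 0
      = f y * ∑ i, 2 * (m y i - S.mulVec (A.mulVec (C y)) i)
          * (-(S.mulVec (A.mulVec w) i)) := by
  classical
  set b : Fin h → Fin p → ℝ :=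
    fun y' i => if y' = y then -(S.mulVec (A.mulVec w) i) else 0 with hb
  have key : (fun t : ℝ => Gt f m S τ A (Function.update C y (C y + t • w)))
      = fun t : ℝ => (∑ y', f y' * ∑ i,
          ((m y' i - S.mulVec (A.mulVec (C y')) i) + t * b y' i) ^ 2)
        + τ * ∑ i, ∑ j, (A i j + t * (0 : ℝ)) ^ 2 := by
    funext t
    unfold Gt
    congr 1
    · refine Finset.sum_congr rfl fun y' _ => ?_
      congr 1
      refine Finset.sum_congr rfl fun i _ => ?_
      rcases eq_or_ne y' y with rfl | hne
      · rw [Function.update_self]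
        rw [Matrix.mulVec_add, Matrix.mulVec_smul, Matrix.mulVec_add, Matrix.mulVec_smul]
        simp only [hb, if_pos rfl, Pi.add_apply, Pi.smul_apply, smul_eq_mul]
        ring
      · rw [Function.update_of_ne hne]
        simp [hb, hne]
    · simp
  rw [key]
  rw [(hasDerivAt_quadG f (fun y' i => m y' i - S.mulVec (A.mulVec (C y')) i) b τ
      (fun i j => A i j) (fun _ _ => 0)).deriv]
  have hsummand : ∀ y' ∈ Finset.univ,
      f y' * ∑ i, 2 * (m y' i - S.mulVec (A.mulVec (C y')) i) * b y' i
        = if y' = y then f y * ∑ i, 2 * (m y i - S.mulVec (A.mulVec (C y)) i)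
            * (-(S.mulVec (A.mulVec w) i)) else 0 := by
    intro y' _
    rcases eq_or_ne y' y with rfl | hne
    · simp [hb]
    · simp [hb, hne]
  rw [Finset.sum_congr rfl hsummand]
  simp [Finset.sum_ite_eq']

private lemma sum4_comm {a b c d : ℕ} (g : Fin a → Fin b → Fin c → Fin d → ℝ) :
    ∑ i, ∑ k, ∑ y, ∑ i', g i k y i' = ∑ y, ∑ k, ∑ i', ∑ i, g i k y i' :=
  calc ∑ i, ∑ k, ∑ y, ∑ i', g i k y i'
      = ∑ k, ∑ i, ∑ y, ∑ i', g i k y i' := Finset.sum_comm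
    _ = ∑ k, ∑ y, ∑ i, ∑ i', g i k y i' := Finset.sum_congr rfl fun k _ => Finset.sum_comm
    _ = ∑ k, ∑ y, ∑ i', ∑ i, g i k y i' :=
        Finset.sum_congr rfl fun k _ => Finset.sum_congr rfl fun y _ => Finset.sum_comm
    _ = ∑ y, ∑ k, ∑ i', ∑ i, g i k y i' := Finset.sum_comm

private lemma mulVec_std_eval {p d : ℕ} (S : Matrix (Fin p) (Fin p) ℝ) (i : Fin p) (k : Fin d)
    (v : Fin d → ℝ) (i' : Fin p) :
    S.mulVec ((Matrix.single i k (1 : ℝ)).mulVec v) i' = S i' i * v k := by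
  rw [Matrix.single_mulVec]
  simp [Matrix.mulVec, dotProduct, Function.update_apply]

private lemma std_double_sum {p d : ℕ} (A : Matrix (Fin p) (Fin d) ℝ) (i : Fin p) (k : Fin d) :
    ∑ i', ∑ j', 2 * A i' j' * Matrix.single i k (1 : ℝ) i' j' = 2 * A i k := by
  simp [Matrix.single, Matrix.of_apply, mul_ite, ite_and, Finset.sum_ite_eq]

private lemma mulVec_single' {p d : ℕ} (A : Matrix (Fin p) (Fin d) ℝ) (j : Fin d) :
    A.mulVec (Pi.single j 1) = fun r => A r j := by
  funext r
  simp [Matrix.mulVec, dotProduct, Pi.single_apply, mul_ite]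

private lemma stationary_value {p d h : ℕ} (f : Fin h → ℝ) (hf : ∀ y, 0 < f y)
    (m : Fin h → Fin p → ℝ) (S : Matrix (Fin p) (Fin p) ℝ) (τ : ℝ) (hτ : 0 < τ)
    (A : Matrix (Fin p) (Fin d) ℝ) (C : Fin h → Fin d → ℝ)
    (hA : ∀ (i : Fin p) (k : Fin d),
      deriv (fun t : ℝ =>
        Gt f m S τ (A + t • Matrix.single i k (1 : ℝ)) C) 0 = 0)
    (hC : ∀ (y : Fin h) (j : Fin d),
      deriv (fun t : ℝ =>
        Gt f m S τ A (Function.update C y (C y + t • (Pi.single j 1 : Fin d → ℝ)))) 0 = 0) :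
    Gt f m S τ A C = ∑ y, f y * ∑ i, (m y i) ^ 2 := by
  classical
  have eq1 : ∀ (i : Fin p) (k : Fin d), τ * (2 * A i k)
      = ∑ y, f y * ∑ i', 2 * (m y i' - S.mulVec (A.mulVec (C y)) i') * (S i' i * C y k) := by
    intro i k
    have h := hA i k
    rw [derivA] at h
    simp only [mulVec_std_eval, std_double_sum, mul_neg, Finset.sum_neg_distrib,
      neg_mul, mul_neg] at h
    linarith
  have eq2 : ∀ (y : Fin h) (j : Fin d),
      ∑ i', 2 * (m y i' - S.mulVec (A.mulVec (C y)) i') * (S.mulVec (fun r => A r j) i') = 0 := by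
    intro y j
    have h := hC y j
    rw [derivC] at h
    rw [mulVec_single'] at h
    simp only [mul_neg, Finset.sum_neg_distrib, mul_neg, neg_eq_zero] at h
    rcases mul_eq_zero.mp h with h' | h'
    · exact absurd h' (hf y).ne'
    · exact h'
  have key : τ * ∑ i, ∑ k, 2 * A i k ^ 2 = 0 := by
    calc τ * ∑ i, ∑ k, 2 * A i k ^ 2
        = ∑ i, ∑ k, A i k * (τ * (2 * A i k)) := by
          rw [Finset.mul_sum]
          refine Finset.sum_congr rfl fun i _ => ?_
          rw [Finset.mul_sum]
          exact Finset.sum_congr rfl fun k _ => by ring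
      _ = ∑ i, ∑ k, A i k * ∑ y, f y * ∑ i',
            2 * (m y i' - S.mulVec (A.mulVec (C y)) i') * (S i' i * C y k) := by
          refine Finset.sum_congr rfl fun i _ => Finset.sum_congr rfl fun k _ => ?_
          rw [eq1 i k]
      _ = ∑ i, ∑ k, ∑ y, ∑ i', A i k * (f y *
            (2 * (m y i' - S.mulVec (A.mulVec (C y)) i') * (S i' i * C y k))) := by
          simp only [Finset.mul_sum]
      _ = ∑ y, ∑ k, ∑ i', ∑ i, A i k * (f y *
            (2 * (m y i' - S.mulVec (A.mulVec (C y)) i') * (S i' i * C y k))) :=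
          sum4_comm _
      _ = ∑ y, f y * ∑ k, C y k * ∑ i',
            2 * (m y i' - S.mulVec (A.mulVec (C y)) i') * (S.mulVec (fun r => A r k) i') := by
          simp only [Matrix.mulVec, dotProduct, Finset.mul_sum]
          refine Finset.sum_congr rfl fun y _ => Finset.sum_congr rfl fun k _ =>
            Finset.sum_congr rfl fun i' _ => Finset.sum_congr rfl fun i _ => by ring
      _ = ∑ y, f y * ∑ k, C y k * 0 := by
          refine Finset.sum_congr rfl fun y _ => ?_
          congr 1
          exact Finset.sum_congr rfl fun k _ => by rw [eq2 y k]
      _ = 0 := by simp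
  have hsum0 : ∑ i, ∑ k, 2 * A i k ^ 2 = 0 := by
    rcases mul_eq_zero.mp key with h' | h'
    · exact absurd h' hτ.ne'
    · exact h'
  have hAzero : A = 0 := by
    ext i k
    have h1 := (Finset.sum_eq_zero_iff_of_nonneg
      (fun i _ => Finset.sum_nonneg fun k _ => by positivity)).mp hsum0 i (Finset.mem_univ i)
    have h2 := (Finset.sum_eq_zero_iff_of_nonneg
      (fun k _ => by positivity)).mp h1 k (Finset.mem_univ k)
    have : A i k ^ 2 = 0 := by linarith
    simpa using pow_eq_zero_iff (n := 2) (by norm_num) |>.mp this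
  subst hAzero
  simp [Gt]

private lemma exists_lt {p d h : ℕ} (hd : 1 ≤ d) (f : Fin h → ℝ) (hf : ∀ y, 0 < f y)
    (m : Fin h → Fin p → ℝ) (S : Matrix (Fin p) (Fin p) ℝ)
    (hS : S.PosSemidef) (τ : ℝ) (hτ : 0 < τ)
    (y₀ : Fin h) (hm : S.mulVec (m y₀) ≠ 0) :
    ∃ (A : Matrix (Fin p) (Fin d) ℝ) (C : Fin h → Fin d → ℝ),
      Gt f m S τ A C < ∑ y, f y * ∑ i, (m y i) ^ 2 := by
  classical
  set v : Fin p → ℝ := S.mulVec (m y₀) with hv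
  set B : ℝ := f y₀ * ∑ i, m y₀ i * v i with hB'
  set D : ℝ := f y₀ * ∑ i, v i ^ 2 + τ * ∑ i, (m y₀ i) ^ 2 with hD'
  have hq : 0 < ∑ i, v i ^ 2 := by
    have hex : ∃ i, v i ≠ 0 := by
      by_contra hcon
      push_neg at hcon
      exact hm (funext hcon)
    obtain ⟨i0, hi0⟩ := hex
    exact Finset.sum_pos' (fun i _ => sq_nonneg _) ⟨i0, Finset.mem_univ _, by positivity⟩
  have hB : 0 < B := by
    have hdot : 0 ≤ ∑ i, m y₀ i * v i := by
      have h2 := hS.dotProduct_mulVec_nonneg (m y₀)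
      simpa [dotProduct, hv] using h2
    have hne : ∑ i, m y₀ i * v i ≠ 0 := by
      intro h0
      exact hm ((hS.dotProduct_mulVec_zero_iff (m y₀)).mp (by simpa [dotProduct, hv] using h0))
    exact mul_pos (hf y₀) (lt_of_le_of_ne hdot (Ne.symm hne))
  have hD : 0 < D := by
    have h1 : 0 ≤ τ * ∑ i, (m y₀ i) ^ 2 :=
      mul_nonneg hτ.le (Finset.sum_nonneg fun _ _ => sq_nonneg _)
    have h2 : 0 < f y₀ * ∑ i, v i ^ 2 := mul_pos (hf y₀) hq
    rw [hD']; linarith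
  set t : ℝ := B / D with ht'
  set j₀ : Fin d := ⟨0, hd⟩ with hj₀
  refine ⟨Matrix.of fun i k => if k = j₀ then t * m y₀ i else 0,
    fun y => if y = y₀ then Pi.single j₀ 1 else 0, ?_⟩
  have hmv : ∀ y : Fin h,
      S.mulVec ((Matrix.of fun i k => if k = j₀ then t * m y₀ i else 0).mulVec
        (if y = y₀ then (Pi.single j₀ 1 : Fin d → ℝ) else 0))
      = fun i => if y = y₀ then t * v i else 0 := by
    intro y
    rcases eq_or_ne y y₀ with rfl | hne
    · rw [if_pos rfl, mulVec_single']
      funext i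
      rw [if_pos rfl]
      have : (fun r => (Matrix.of fun i k => if k = j₀ then t * m y i else 0) r j₀)
          = t • m y := by
        funext r; simp [Matrix.of_apply]
      rw [this, Matrix.mulVec_smul]
      simp [hv]
    · rw [if_neg hne]
      funext i
      rw [if_neg hne]
      simp
  have hval : Gt f m S τ (Matrix.of fun i k => if k = j₀ then t * m y₀ i else 0)
      (fun y => if y = y₀ then Pi.single j₀ 1 else 0)
      = (∑ y, f y * ∑ i, (m y i) ^ 2) + (-(2 * t) * B + t ^ 2 * D) := by
    unfold Gt
    have hterm2 : τ * ∑ i, ∑ k, ((Matrix.of fun i k =>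
        if k = j₀ then t * m y₀ i else 0) i k) ^ 2
        = t ^ 2 * (τ * ∑ i, (m y₀ i) ^ 2) := by
      have : ∀ i : Fin p, ∑ k, ((Matrix.of fun i k =>
          if k = j₀ then t * m y₀ i else 0) i k) ^ 2 = t ^ 2 * (m y₀ i) ^ 2 := by
        intro i
        have : ∀ k : Fin d, ((Matrix.of fun i k => if k = j₀ then t * m y₀ i else 0) i k) ^ 2
            = if k = j₀ then t ^ 2 * (m y₀ i) ^ 2 else 0 := by
          intro k
          rcases eq_or_ne k j₀ with rfl | hk
          · simp [Matrix.of_apply]; ring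
          · simp [Matrix.of_apply, hk]
        rw [Finset.sum_congr rfl fun k _ => this k, Finset.sum_ite_eq' Finset.univ j₀]
        simp
      rw [Finset.sum_congr rfl fun i _ => this i, ← Finset.mul_sum]
      ring
    have hterm1 : ∑ y, f y * ∑ i, (m y i - S.mulVec ((Matrix.of fun i k =>
        if k = j₀ then t * m y₀ i else 0).mulVec
          (if y = y₀ then (Pi.single j₀ 1 : Fin d → ℝ) else 0)) i) ^ 2
        = (∑ y, f y * ∑ i, (m y i) ^ 2)
          + (-(2 * t) * B + t ^ 2 * (f y₀ * ∑ i, v i ^ 2)) := by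
      have hsummand : ∀ y ∈ Finset.univ, f y * ∑ i, (m y i - S.mulVec ((Matrix.of fun i k =>
          if k = j₀ then t * m y₀ i else 0).mulVec
            (if y = y₀ then (Pi.single j₀ 1 : Fin d → ℝ) else 0)) i) ^ 2
          = f y * ∑ i, (m y i) ^ 2 + (if y = y₀ then
              -(2 * t) * B + t ^ 2 * (f y₀ * ∑ i, v i ^ 2) else 0) := by
        intro y _
        rw [hmv y]
        rcases eq_or_ne y y₀ with rfl | hne
        · simp only [eq_self_iff_true, if_true]
          have : ∀ i : Fin p, (m y i - t * v i) ^ 2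
              = (m y i) ^ 2 + (t ^ 2 * v i ^ 2 - 2 * t * (m y i * v i)) := by
            intro i; ring
          rw [Finset.sum_congr rfl fun i _ => this i, Finset.sum_add_distrib,
            Finset.sum_sub_distrib, ← Finset.mul_sum, ← Finset.mul_sum]
          rw [hB']
          ring
        · simp [hne]
      rw [Finset.sum_congr rfl hsummand, Finset.sum_add_distrib,
        Finset.sum_ite_eq' Finset.univ y₀]
      simp
    rw [hterm1, hterm2, hD']
    ring
  rw [hval]
  have hneg : -(2 * t) * B + t ^ 2 * D = -(B ^ 2 / D) := by
    rw [ht']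
    field_simp
    ring
  rw [hneg]
  have : 0 < B ^ 2 / D := div_pos (by positivity) hD
  linarith

/-- If `τ > 0`, `Σ` is symmetric positive semidefinite with `rank(Σ) ≥ d ≥ 1`, and some
`Σ m_{y₀} ≠ 0`, then the infimum of `G_τ` is strictly less than `Σ_y f_y ‖m_y‖²`, every
stationary point of `G_τ` has value `Σ_y f_y ‖m_y‖²`, and the infimum is not attained. -/
theorem inf_not_attained {p d h : ℕ} (hd : 1 ≤ d) (f : Fin h → ℝ) (hf : ∀ y, 0 < f y)
    (m : Fin h → Fin p → ℝ) (S : Matrix (Fin p) (Fin p) ℝ)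
    (hS : S.PosSemidef) (hrank : d ≤ S.rank)
    (τ : ℝ) (hτ : 0 < τ)
    (y₀ : Fin h) (hm : S.mulVec (m y₀) ≠ 0) :
    (∃ (A : Matrix (Fin p) (Fin d) ℝ) (C : Fin h → Fin d → ℝ),
        Gt f m S τ A C < ∑ y, f y * ∑ i, (m y i) ^ 2)
      ∧ (∀ (A : Matrix (Fin p) (Fin d) ℝ) (C : Fin h → Fin d → ℝ),
          (∀ (i : Fin p) (k : Fin d),
            deriv (fun t : ℝ =>
              Gt f m S τ (A + t • Matrix.single i k (1 : ℝ)) C) 0 = 0) →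
          (∀ (y : Fin h) (j : Fin d),
            deriv (fun t : ℝ =>
              Gt f m S τ A (Function.update C y (C y + t • (Pi.single j 1 : Fin d → ℝ)))) 0 = 0) →
          Gt f m S τ A C = ∑ y, f y * ∑ i, (m y i) ^ 2)
      ∧ ¬ ∃ (A : Matrix (Fin p) (Fin d) ℝ) (C : Fin h → Fin d → ℝ),
          ∀ (A' : Matrix (Fin p) (Fin d) ℝ) (C' : Fin h → Fin d → ℝ),
            Gt f m S τ A C ≤ Gt f m S τ A' C' := by
  refine ⟨exists_lt hd f hf m S hS τ hτ y₀ hm,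
    fun A C hA hC => stationary_value f hf m S τ hτ A C hA hC, ?_⟩
  rintro ⟨A, C, hmin⟩
  have hA : ∀ (i : Fin p) (k : Fin d),
      deriv (fun t : ℝ =>
        Gt f m S τ (A + t • Matrix.single i k (1 : ℝ)) C) 0 = 0 := by
    intro i k
    apply IsLocalMin.deriv_eq_zero
    refine Filter.Eventually.of_forall fun t => ?_
    have h0 : A + (0 : ℝ) • Matrix.single i k (1 : ℝ) = A := by simp
    simp only [h0]
    exact hmin _ _
  have hC : ∀ (y : Fin h) (j : Fin d),
      deriv (fun t : ℝ =>
        Gt f m S τ A (Function.update C y (C y + t • (Pi.single j 1 : Fin d → ℝ)))) 0 = 0 := by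
    intro y j
    apply IsLocalMin.deriv_eq_zero
    refine Filter.Eventually.of_forall fun t => ?_
    have h0 : Function.update C y (C y + (0 : ℝ) • (Pi.single j 1 : Fin d → ℝ)) = C := by
      simp [Function.update_eq_self]
    simp only [h0]
    exact hmin _ _
  have hval := stationary_value f hf m S τ hτ A C hA hC
  obtain ⟨A₁, C₁, hlt⟩ := exists_lt hd f hf m S hS τ hτ y₀ hm
  have := hmin A₁ C₁
  rw [hval] at this
  exact absurd this (not_le.mpr hlt)
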